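/- Under these hypotheses, for every t > 0 the series defining p(t) converges (so p(t) < ∞), and lim_{t→0+} (log p(t))/(log t) = −β/(β − L). (This is the analytic content of equation (1.2) of Theorem 1.1: with L = log λ, the on-diagonal heat kernel of the jump process on the Martin boundary of a supercritical Galton–Watson tree satisfies −lim_{t→0} log p_t^λ(ω,ω)/log t = β_λ/(β_λ − log λ) for HARM-a.e. ω, ℙ_GW-a.s.) -/

import Mathlib

open Filter Set

set_option maxHeartbeats 1000000

lemma aux_evBounds (f : ℕ → ℝ) (hf : ∀ n, 0 < f n) {c δ : ℝ} (hδ : 0 < δ)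
    (h : Tendsto (fun n : ℕ => Real.log (f n) / n) atTop (nhds c)) :
    ∀ᶠ n : ℕ in atTop, Real.exp ((c - δ) * (n:ℝ)) ≤ f n ∧ f n ≤ Real.exp ((c + δ) * (n:ℝ)) := by
  filter_upwards [Metric.tendsto_nhds.mp h δ hδ, eventually_ge_atTop 1] with n hn hn1
  rw [Real.dist_eq, abs_lt] at hn
  have hnpos : (0:ℝ) < n := by exact_mod_cast hn1
  have h1 : (c - δ) * n < Real.log (f n) := by
    rw [← lt_div_iff₀ hnpos]; linarith [hn.1]
  have h2 : Real.log (f n) < (c + δ) * n := by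
    rw [← div_lt_iff₀ hnpos]; linarith [hn.2]
  constructor
  · calc Real.exp ((c - δ) * n) ≤ Real.exp (Real.log (f n)) := Real.exp_le_exp.mpr h1.le
      _ = f n := Real.exp_log (hf n)
  · calc f n = Real.exp (Real.log (f n)) := (Real.exp_log (hf n)).symm
      _ ≤ Real.exp ((c + δ) * n) := Real.exp_le_exp.mpr h2.le

lemma aux_exp_neg_le {x : ℝ} (hx : 0 < x) (k : ℕ) :
    Real.exp (-x) ≤ (k.factorial : ℝ) / x ^ k := by
  have h1 : x ^ k / (k.factorial : ℝ) ≤ Real.exp x := by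
    have := Real.sum_le_exp_of_nonneg hx.le (k + 1)
    refine le_trans ?_ this
    exact Finset.single_le_sum (f := fun i => x ^ i / (i.factorial : ℝ))
      (fun i _ => by positivity) (Finset.self_mem_range_succ k)
  have hxk : (0:ℝ) < x ^ k / (k.factorial : ℝ) := by positivity
  rw [Real.exp_neg]
  calc (Real.exp x)⁻¹ ≤ (x ^ k / (k.factorial : ℝ))⁻¹ := by
        exact inv_anti₀ hxk h1
    _ = (k.factorial : ℝ) / x ^ k := by rw [inv_div]

lemma aux_term (Hn1 Hn Dn β γ δ t : ℝ) (k : ℕ) (ht : 0 < t)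
    (hHn : 0 < Hn) (hHn1 : 0 < Hn1) (hDn : 0 < Dn) (n : ℕ)
    (hH1 : Real.exp ((-β - δ) * ((n:ℝ)+1)) ≤ Hn1) (hD1 : Dn ≤ Real.exp ((-γ + δ) * n)) :
    (1/Hn1 - 1/Hn) * Real.exp (-t/Dn)
      ≤ ((k.factorial : ℝ) * Real.exp (β+δ) / t^k) * Real.exp (((β+δ) - k*(γ-δ)) * n) := by
  have h1 : 1/Hn1 ≤ Real.exp ((β+δ) * ((n:ℝ)+1)) := by
    rw [one_div]
    have h := inv_anti₀ (Real.exp_pos ((-β - δ) * ((n:ℝ)+1))) hH1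
    rwa [← Real.exp_neg, show -((-β - δ) * ((n:ℝ)+1)) = (β+δ)*((n:ℝ)+1) by ring] at h
  have h2 : Real.exp (-t/Dn) ≤ (k.factorial : ℝ) / (t/Dn)^k := by
    have := aux_exp_neg_le (x := t/Dn) (by positivity) k
    rwa [← neg_div] at this
  have h3 : (1/Hn1 - 1/Hn) * Real.exp (-t/Dn) ≤ (1/Hn1) * Real.exp (-t/Dn) := by
    have : 0 ≤ 1/Hn := by positivity
    have he := Real.exp_nonneg (-t/Dn)
    nlinarith
  have h4 : (1/Hn1) * Real.exp (-t/Dn)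
      ≤ Real.exp ((β+δ) * ((n:ℝ)+1)) * ((k.factorial : ℝ) / (t/Dn)^k) :=
    mul_le_mul h1 h2 (Real.exp_nonneg _) (Real.exp_nonneg _)
  have h5 : (k.factorial : ℝ) / (t/Dn)^k = (k.factorial : ℝ) * Dn^k / t^k := by
    rw [div_pow]; field_simp
  have h6 : Dn ^ k ≤ Real.exp (k * ((-γ + δ) * n)) := by
    rw [Real.exp_nat_mul]
    exact pow_le_pow_left₀ hDn.le hD1 k
  calc (1/Hn1 - 1/Hn) * Real.exp (-t/Dn)
      ≤ Real.exp ((β+δ) * ((n:ℝ)+1)) * ((k.factorial : ℝ) * Dn^k / t^k) := by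
        rw [← h5]; exact h3.trans h4
    _ ≤ Real.exp ((β+δ) * ((n:ℝ)+1)) * ((k.factorial : ℝ) * Real.exp (k * ((-γ + δ) * n)) / t^k) := by
        apply mul_le_mul_of_nonneg_left _ (Real.exp_nonneg _)
        apply div_le_div_of_nonneg_right _ (by positivity)
        exact mul_le_mul_of_nonneg_left h6 (by positivity)
    _ = ((k.factorial : ℝ) * Real.exp (β+δ) / t^k) * Real.exp (((β+δ) - k*(γ-δ)) * n) := by
        rw [show ((β+δ):ℝ) * ((n:ℝ)+1) = (β+δ) + (β+δ)*n by ring,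
          show (((β+δ) - k*(γ-δ)) * n : ℝ) = (β+δ)*n + k*((-γ+δ)*n) by ring]
        simp only [Real.exp_add]; ring

lemma aux_summable (H D : ℕ → ℝ) (hH_anti : Antitone H)
    (hH_pos : ∀ n, 0 < H n) (hD_pos : ∀ n, 0 < D n)
    (β γ : ℝ) (hγ : 0 < γ)
    (hH : Tendsto (fun n : ℕ => Real.log (H n) / n) atTop (nhds (-β)))
    (hD : Tendsto (fun n : ℕ => Real.log (D n) / n) atTop (nhds (-γ)))
    (t : ℝ) (ht : 0 < t) :
    Summable (fun n : ℕ => (1 / H (n + 1) - 1 / H n) * Real.exp (-t / D n)) := by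
  obtain ⟨k, hk⟩ := exists_nat_gt ((β + γ) / (γ/2))
  have hδ : (0:ℝ) < γ/2 := by positivity
  have hk' : β + γ < k * (γ/2) := (div_lt_iff₀ hδ).mp hk
  have hρ : ((β+γ/2) - k*(γ-γ/2)) < 0 := by nlinarith
  obtain ⟨N₁, hN₁⟩ := eventually_atTop.mp
    ((aux_evBounds H hH_pos hδ hH).and (aux_evBounds D hD_pos hδ hD))
  set r : ℝ := Real.exp ((β+γ/2) - k*(γ-γ/2)) with hr
  have hr1 : r < 1 := Real.exp_lt_one_iff.mpr hρ  -- check name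
  apply summable_of_isBigO_nat (summable_geometric_of_lt_one (Real.exp_nonneg _) hr1)
  rw [Asymptotics.isBigO_iff]
  refine ⟨(k.factorial : ℝ) * Real.exp (β+γ/2) / t^k, eventually_atTop.mpr ⟨N₁, fun n hn => ?_⟩⟩
  have ha : 0 ≤ 1 / H (n+1) - 1 / H n :=
    sub_nonneg.mpr (one_div_le_one_div_of_le (hH_pos (n+1)) (hH_anti (Nat.le_succ n)))
  have hrn : r ^ n = Real.exp (((β+γ/2) - k*(γ-γ/2)) * n) := by
    rw [hr, ← Real.exp_nat_mul, mul_comm]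
  rw [Real.norm_eq_abs, Real.norm_eq_abs, abs_of_nonneg (mul_nonneg ha (Real.exp_nonneg _)),
    abs_of_nonneg (pow_nonneg (Real.exp_nonneg _) n), hrn]
  have hH1 : Real.exp ((-β - γ/2) * ((n:ℝ)+1)) ≤ H (n+1) := by
    have := (hN₁ (n+1) (le_trans hn (Nat.le_succ n))).1.1
    rwa [show ((-β) - γ/2 : ℝ) = -β - γ/2 by ring, Nat.cast_add, Nat.cast_one] at this
  have hD1 : D n ≤ Real.exp ((-γ + γ/2) * n) := by
    have := (hN₁ n hn).2.2
    rwa [show ((-γ) + γ/2 : ℝ) = -γ + γ/2 by ring] at this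
  exact aux_term (H (n+1)) (H n) (D n) β γ (γ/2) t k ht (hH_pos n) (hH_pos (n+1))
    (hD_pos n) n hH1 hD1

/-- On-diagonal heat kernel asymptotics (eq. (1.2) of Theorem 1.1, sequence form):
the series defining `p(t)` converges for every `t > 0`, and
`lim_{t→0+} log p(t) / log t = -β/(β - L)`. -/
theorem stmt0 (H D R : ℕ → ℝ) (β L : ℝ)
    (hH_anti : Antitone H) (hH0 : H 0 = 1) (hH_pos : ∀ n, 0 < H n)
    (hD_anti : StrictAnti D) (hD_pos : ∀ n, 0 < D n)
    (hR_pos : ∀ n, 0 < R n) (hDHR : ∀ n, D n = H n * R n)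
    (hβ : β > max 0 L)
    (hHlim : Tendsto (fun n : ℕ => Real.log (H n) / n) atTop (nhds (-β)))
    (hRlim : Tendsto (fun n : ℕ => Real.log (R n) / n) atTop (nhds L)) :
    (∀ t : ℝ, 0 < t →
      Summable (fun n : ℕ => (1 / H (n + 1) - 1 / H n) * Real.exp (-t / D n))) ∧
    Tendsto
      (fun t : ℝ =>
        Real.log (1 + ∑' n : ℕ, (1 / H (n + 1) - 1 / H n) * Real.exp (-t / D n)) /
          Real.log t)
      (nhdsWithin 0 (Ioi 0)) (nhds (-(β / (β - L)))) := by
  have hβ0 : 0 < β := lt_of_le_of_lt (le_max_left 0 L) hβ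
  have hLβ : L < β := lt_of_le_of_lt (le_max_right 0 L) hβ
  have hγ : (0:ℝ) < β - L := sub_pos.mpr hLβ
  have hDlim : Tendsto (fun n : ℕ => Real.log (D n) / n) atTop (nhds (-(β - L))) := by
    have heq : (fun n : ℕ => Real.log (D n) / n)
        = fun n : ℕ => Real.log (H n) / n + Real.log (R n) / n := by
      funext n; rw [hDHR n, Real.log_mul (hH_pos n).ne' (hR_pos n).ne', add_div]
    rw [heq, show -(β - L) = -β + L by ring]
    exact hHlim.add hRlim
  have hsum : ∀ t : ℝ, 0 < t →
      Summable (fun n : ℕ => (1 / H (n + 1) - 1 / H n) * Real.exp (-t / D n)) :=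
    fun t ht => aux_summable H D hH_anti hH_pos hD_pos β (β - L) hγ hHlim hDlim t ht
  refine ⟨hsum, ?_⟩
  have ha_nonneg : ∀ n, 0 ≤ 1 / H (n+1) - 1 / H n := fun n =>
    sub_nonneg.mpr (one_div_le_one_div_of_le (hH_pos (n+1)) (hH_anti (Nat.le_succ n)))
  -- D tends to 0
  have hD0 : Tendsto D atTop (nhds 0) := by
    have hb := aux_evBounds D hD_pos (by positivity : (0:ℝ) < (β-L)/2) hDlim
    apply squeeze_zero' (Eventually.of_forall (fun n => (hD_pos n).le))
      (hb.mono (fun n hn => hn.2))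
    have : ∀ n : ℕ, Real.exp ((-(β-L) + (β-L)/2) * (n:ℝ)) = Real.exp (-((β-L)/2)) ^ n := by
      intro n; rw [← Real.exp_nat_mul]; ring_nf
    simp only [this]
    exact tendsto_pow_atTop_nhds_zero_of_lt_one (Real.exp_nonneg _)
      (Real.exp_lt_one_iff.mpr (by linarith))
  rw [Metric.tendsto_nhds]
  intro ε hε
  set c := β / (β - L) with hc
  obtain ⟨k, hk⟩ := exists_nat_gt ((β + 1) / (β - L))
  have hkγ : β + 1 < k * (β - L) := (div_lt_iff₀ hγ).mp hk
  -- choose δ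
  have tc : ∀ b : ℝ, Tendsto (fun _ : ℝ => b) (nhds 0) (nhds b) := fun b => tendsto_const_nhds
  have e1 : Tendsto (fun δ : ℝ => (β-δ)/((β-L)+δ)) (nhds 0) (nhds c) := by
    have := Tendsto.div ((tc β).sub tendsto_id) ((tc (β-L)).add tendsto_id)
      (by simpa using hγ.ne')
    convert this using 2 <;> simp [hc]
  have e2 : Tendsto (fun δ : ℝ => (β+δ)/((β-L)-δ)) (nhds 0) (nhds c) := by
    have := Tendsto.div ((tc β).add tendsto_id) ((tc (β-L)).sub tendsto_id)
      (by simpa using hγ.ne')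
    convert this using 2 <;> simp [hc]
  have e3 : Tendsto (fun δ : ℝ => (2*k*δ+β+δ)/((β-L)+δ)) (nhds 0) (nhds c) := by
    have h1 : Tendsto (fun δ : ℝ => 2*(k:ℝ)*δ+β+δ) (nhds 0) (nhds β) := by
      have : Continuous (fun δ : ℝ => 2*(k:ℝ)*δ+β+δ) := by continuity
      simpa using this.tendsto 0
    have := Tendsto.div h1 ((tc (β-L)).add tendsto_id) (by simpa using hγ.ne')
    convert this using 2 <;> simp [hc]
  have e4 : Tendsto (fun δ : ℝ => (k:ℝ)*((β-L)-δ)-(β+δ)) (nhds 0) (nhds ((k:ℝ)*(β-L)-β)) := by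
    have : Continuous (fun δ : ℝ => (k:ℝ)*((β-L)-δ)-(β+δ)) := by continuity
    simpa using this.tendsto 0
  have hEv : ∀ᶠ δ in nhdsWithin (0:ℝ) (Ioi 0),
      (c - ε/8 < (β-δ)/((β-L)+δ) ∧ (β+δ)/((β-L)-δ) < c + ε/8 ∧
       (2*k*δ+β+δ)/((β-L)+δ) < c + ε/8) ∧
      (1 < (k:ℝ)*((β-L)-δ)-(β+δ) ∧ δ < β - L ∧ δ < β) := by
    apply Eventually.filter_mono nhdsWithin_le_nhds
    have q1 := e1.eventually_const_lt (show c - ε/8 < c by linarith)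
    have q2 := e2.eventually_lt_const (show c < c + ε/8 by linarith)
    have q3 := e3.eventually_lt_const (show c < c + ε/8 by linarith)
    have q4 := e4.eventually_const_lt (show (1:ℝ) < (k:ℝ)*(β-L)-β by linarith)
    have q5 := tendsto_id.eventually_lt_const hγ
    have q6 := tendsto_id.eventually_lt_const hβ0
    filter_upwards [q1, q2, q3, q4, q5, q6] with δ w1 w2 w3 w4 w5 w6
    exact ⟨⟨w1, w2, w3⟩, w4, w5, w6⟩
  obtain ⟨δ, hδcond, hδ0⟩ := (hEv.and eventually_mem_nhdsWithin).exists
  obtain ⟨⟨h1, h2, h3⟩, hρ1, hδγ, hδβ⟩ := hδcond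
  rw [mem_Ioi] at hδ0
  -- eventual bounds with this δ
  obtain ⟨N₀, hN₀⟩ := eventually_atTop.mp
    ((aux_evBounds H hH_pos hδ0 hHlim).and (aux_evBounds D hD_pos hδ0 hDlim))
  set r : ℝ := Real.exp ((β+δ) - k*((β-L)-δ)) with hrdef
  have hr1 : r < 1 := Real.exp_lt_one_iff.mpr (by linarith)
  have hr0 : 0 < r := Real.exp_pos _
  have h1r : 0 < 1 - r := by linarith
  set K2 : ℝ := ((k.factorial : ℝ) * Real.exp (β+δ)) * (1 - r)⁻¹ with hK2
  have hK2pos : 0 < K2 := by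
    apply mul_pos (mul_pos (by exact_mod_cast k.factorial_pos) (Real.exp_pos _))
    exact inv_pos.mpr h1r
  set C : ℝ := Real.exp (β+δ) + K2 with hCdef
  have hexp1 : 1 < Real.exp (β+δ) := by
    rw [show (1:ℝ) = Real.exp 0 from (Real.exp_zero).symm]
    exact Real.exp_lt_exp.mpr (by linarith)
  have hC1 : 1 < C := by simp only [hCdef]; linarith
  have hlogC : 0 < Real.log C := Real.log_pos hC1
  set S₀ : ℝ := max (8/ε) (8*Real.log C/ε) with hS₀
  filter_upwards [eventually_mem_nhdsWithin,
    (tendsto_id.eventually_lt_const (hD_pos (N₀+1))).filter_mono nhdsWithin_le_nhds,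
    (tendsto_id.eventually_lt_const one_pos).filter_mono nhdsWithin_le_nhds,
    Real.tendsto_log_nhdsGT_zero.eventually (eventually_le_atBot (-S₀))]
    with t ht0 htD ht1 htS
  rw [mem_Ioi] at ht0
  simp only [id_eq] at htD ht1
  set S : ℝ := -Real.log t with hSdef
  have hS0 : 0 < S := by
    have := Real.log_neg ht0 ht1
    simp only [hSdef]; linarith
  have hSS₀ : S₀ ≤ S := by simp only [hSdef]; linarith
  have hS8 : 1/S ≤ ε/8 := by
    rw [div_le_div_iff₀ hS0 (by linarith : (0:ℝ) < 8)]
    have h8 : 8/ε ≤ S := le_trans (le_max_left _ _) hSS₀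
    rw [div_le_iff₀ hε] at h8
    linarith
  have hSlog : Real.log C / S ≤ ε/8 := by
    rw [div_le_div_iff₀ hS0 (by linarith : (0:ℝ) < 8)]
    have h8 : 8*Real.log C/ε ≤ S := le_trans (le_max_right _ _) hSS₀
    rw [div_le_iff₀ hε] at h8
    linarith
  have hex : ∃ n, D n < t := (hD0.eventually_lt_const ht0).exists
  obtain ⟨N, hDN, hNt⟩ : ∃ N : ℕ, D N < t ∧ ∀ m, m < N → t ≤ D m := by
    classical
    exact ⟨Nat.find hex, Nat.find_spec hex, fun m hm => le_of_not_gt (Nat.find_min hex hm)⟩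
  have hN2 : N₀ + 2 ≤ N := by
    by_contra hcon
    push_neg at hcon
    have : D (N₀+1) ≤ D N := hD_anti.antitone (by omega)
    linarith
  have htD1 : t ≤ D (N-1) := hNt (N-1) (by omega)
  have hcastN1 : ((N-1:ℕ):ℝ) = (N:ℝ) - 1 := by
    rw [Nat.cast_sub (by omega), Nat.cast_one]
  -- bounds relating N and S
  have hNlow : S / ((β-L)+δ) < (N:ℝ) := by
    have hb := (hN₀ N (by omega)).2.1
    have hlt : Real.exp ((-(β-L) - δ) * (N:ℝ)) < t := lt_of_le_of_lt hb hDN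
    rw [← Real.exp_log ht0] at hlt
    have := Real.exp_lt_exp.mp hlt
    rw [div_lt_iff₀ (by linarith : (0:ℝ) < (β-L)+δ)]
    simp only [hSdef]
    linarith [this]
  have hNup : (N:ℝ) ≤ S/((β-L)-δ) + 1 := by
    have hb := (hN₀ (N-1) (by omega)).2.2
    have hle : t ≤ Real.exp ((-(β-L) + δ) * ((N-1:ℕ):ℝ)) := le_trans htD1 hb
    rw [← Real.exp_log ht0] at hle
    have := Real.exp_le_exp.mp hle
    rw [hcastN1] at this
    rw [← sub_le_iff_le_add, le_div_iff₀ (by linarith : (0:ℝ) < (β-L)-δ)]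
    simp only [hSdef]
    linarith [this]
  
  -- the series and its pieces
  set f : ℕ → ℝ := fun n => (1 / H (n + 1) - 1 / H n) * Real.exp (-t / D n) with hfdef
  have hfs : Summable f := hsum t ht0
  have hf_nonneg : ∀ n, 0 ≤ f n := fun n => mul_nonneg (ha_nonneg n) (Real.exp_nonneg _)
  set P : ℝ := ∑' n, f n with hPdef
  have hsplit : ∑ i ∈ Finset.range N, f i + ∑' i, f (i + N) = P := Summable.sum_add_tsum_nat_add N hfs
  have htail0 : 0 ≤ ∑' i, f (i + N) := tsum_nonneg (fun i => hf_nonneg _)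
  have hP0 : 0 ≤ P := tsum_nonneg hf_nonneg
  have htel : ∑ i ∈ Finset.range N, (1/H (i+1) - 1/H i) = 1/H N - 1 := by
    rw [Finset.sum_range_sub (fun n => 1/H n) N, hH0]; norm_num
  -- lower bound
  have hhead_lb : Real.exp (-(1:ℝ)) * (1/H N - 1) ≤ ∑ i ∈ Finset.range N, f i := by
    calc Real.exp (-(1:ℝ)) * (1/H N - 1)
        = ∑ i ∈ Finset.range N, Real.exp (-(1:ℝ)) * (1/H (i+1) - 1/H i) := by
          rw [← Finset.mul_sum, htel]
      _ ≤ ∑ i ∈ Finset.range N, f i := by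
          apply Finset.sum_le_sum
          intro i hi
          have hti : t ≤ D i := hNt i (Finset.mem_range.mp hi)
          have he : Real.exp (-(1:ℝ)) ≤ Real.exp (-t / D i) := by
            apply Real.exp_le_exp.mpr
            rw [neg_div, neg_le_neg_iff]
            exact (div_le_one (hD_pos i)).mpr hti
          calc Real.exp (-(1:ℝ)) * (1/H (i+1) - 1/H i)
              = (1/H (i+1) - 1/H i) * Real.exp (-(1:ℝ)) := by ring
            _ ≤ (1/H (i+1) - 1/H i) * Real.exp (-t / D i) :=
                mul_le_mul_of_nonneg_left he (ha_nonneg i)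
  have hHlow : Real.exp ((β-δ)*(N:ℝ)) ≤ 1/H N := by
    have hb := (hN₀ N (by omega)).1.2
    rw [le_div_iff₀ (hH_pos N)]
    calc Real.exp ((β-δ)*(N:ℝ)) * H N
        ≤ Real.exp ((β-δ)*(N:ℝ)) * Real.exp ((-β+δ)*(N:ℝ)) :=
          mul_le_mul_of_nonneg_left hb (Real.exp_nonneg _)
      _ = 1 := by
          rw [← Real.exp_add, show (β-δ)*(N:ℝ) + (-β+δ)*(N:ℝ) = 0 by ring, Real.exp_zero]
  have hp_lb : Real.exp ((β-δ)*(N:ℝ) - 1) ≤ 1 + P := by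
    have he1 : Real.exp (-(1:ℝ)) ≤ 1 := Real.exp_le_one_iff.mpr (by norm_num)
    have he0 : 0 ≤ Real.exp (-(1:ℝ)) := Real.exp_nonneg _
    calc Real.exp ((β-δ)*(N:ℝ) - 1)
        = Real.exp ((β-δ)*(N:ℝ)) * Real.exp (-(1:ℝ)) := by
          rw [← Real.exp_add]; ring_nf
      _ ≤ (1/H N) * Real.exp (-(1:ℝ)) := mul_le_mul_of_nonneg_right hHlow he0
      _ = Real.exp (-(1:ℝ)) * (1/H N) := by ring
      _ ≤ 1 + Real.exp (-(1:ℝ)) * (1/H N - 1) := by rw [mul_sub, mul_one]; linarith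
      _ ≤ 1 + ∑ i ∈ Finset.range N, f i := by linarith [hhead_lb]
      _ ≤ 1 + P := by linarith [htail0, hsplit]
  have hlb : ((β-δ)/((β-L)+δ))*S - 1 ≤ Real.log (1+P) := by
    have h0 : (β-δ)*(S/((β-L)+δ)) ≤ (β-δ)*(N:ℝ) :=
      mul_le_mul_of_nonneg_left hNlow.le (by linarith)
    have h1' := (Real.le_log_iff_exp_le (by linarith : (0:ℝ) < 1 + P)).mpr hp_lb
    calc ((β-δ)/((β-L)+δ))*S - 1 = (β-δ)*(S/((β-L)+δ)) - 1 := by ring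
      _ ≤ (β-δ)*(N:ℝ) - 1 := by linarith
      _ ≤ Real.log (1+P) := h1'
  -- upper bound
  have hhead_ub : ∑ i ∈ Finset.range N, f i ≤ 1/H N - 1 := by
    rw [← htel]
    apply Finset.sum_le_sum
    intro i _
    have hle1 : Real.exp (-t / D i) ≤ 1 := by
      apply Real.exp_le_one_iff.mpr
      rw [neg_div]
      have : 0 ≤ t / D i := div_nonneg ht0.le (hD_pos i).le
      linarith
    calc (1/H (i+1) - 1/H i) * Real.exp (-t/D i)
        ≤ (1/H (i+1) - 1/H i) * 1 := mul_le_mul_of_nonneg_left hle1 (ha_nonneg i)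
      _ = 1/H (i+1) - 1/H i := mul_one _
  have hrpow : ∀ m : ℕ, r ^ m = Real.exp (((β+δ) - k*((β-L)-δ)) * (m:ℝ)) := by
    intro m; rw [hrdef, ← Real.exp_nat_mul, mul_comm]
  have htail_ub : ∑' i, f (i + N)
      ≤ ((k.factorial : ℝ) * Real.exp (β+δ) / t^k) * (r^N * (1-r)⁻¹) := by
    have hpt : ∀ i : ℕ, f (i+N)
        ≤ ((k.factorial : ℝ) * Real.exp (β+δ) / t^k) * r^(i+N) := by
      intro i
      have hH1 : Real.exp ((-β - δ) * (((i+N:ℕ):ℝ)+1)) ≤ H (i+N+1) := by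
        have := (hN₀ (i+N+1) (by omega)).1.1
        have hcast : (((i+N+1:ℕ)):ℝ) = ((i+N:ℕ):ℝ)+1 := by push_cast; ring
        rwa [hcast] at this
      have hD1 : D (i+N) ≤ Real.exp ((-(β-L) + δ) * ((i+N:ℕ):ℝ)) := (hN₀ (i+N) (by omega)).2.2
      have hat := aux_term (H (i+N+1)) (H (i+N)) (D (i+N)) β (β-L) δ t k ht0
        (hH_pos (i+N)) (hH_pos (i+N+1)) (hD_pos (i+N)) (i+N) hH1 hD1
      rw [hrpow (i+N)]
      exact hat
    have hsum_rhs : Summable (fun i : ℕ =>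
        ((k.factorial : ℝ) * Real.exp (β+δ) / t^k) * r^(i+N)) := by
      simp only [pow_add]
      exact ((summable_geometric_of_lt_one hr0.le hr1).mul_right _).mul_left _
    calc ∑' i, f (i+N)
        ≤ ∑' i, ((k.factorial : ℝ) * Real.exp (β+δ) / t^k) * r^(i+N) :=
          Summable.tsum_le_tsum hpt ((summable_nat_add_iff N).mpr hfs) hsum_rhs
      _ = ((k.factorial : ℝ) * Real.exp (β+δ) / t^k) * (r^N * (1-r)⁻¹) := by
          simp only [pow_add]
          rw [tsum_mul_left, tsum_mul_right, tsum_geometric_of_lt_one hr0.le hr1]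
          ring
  set Mx : ℝ := max ((β+δ)/((β-L)-δ)) ((2*k*δ+β+δ)/((β-L)+δ)) with hMx
  have hMx1 : (β+δ)/((β-L)-δ) ≤ Mx := le_max_left _ _
  have hMx2 : (2*k*δ+β+δ)/((β-L)+δ) ≤ Mx := le_max_right _ _
  have hMxc : Mx < c + ε/8 := max_lt h2 h3
  have hpiece1 : 1/H N ≤ Real.exp (β+δ) * Real.exp (Mx * S) := by
    have hb := (hN₀ N (by omega)).1.1
    have h1H : 1/H N ≤ Real.exp ((β+δ)*(N:ℝ)) := by
      rw [div_le_iff₀ (hH_pos N)]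
      calc (1:ℝ) = Real.exp ((β+δ)*(N:ℝ)) * Real.exp ((-β-δ)*(N:ℝ)) := by
            rw [← Real.exp_add, show (β+δ)*(N:ℝ) + (-β-δ)*(N:ℝ) = 0 by ring, Real.exp_zero]
        _ ≤ Real.exp ((β+δ)*(N:ℝ)) * H N := mul_le_mul_of_nonneg_left hb (Real.exp_nonneg _)
    have hexpmono : Real.exp ((β+δ)*(N:ℝ)) ≤ Real.exp ((β+δ) + Mx * S) := by
      apply Real.exp_le_exp.mpr
      have hNb : (β+δ)*(N:ℝ) ≤ (β+δ)*(S/((β-L)-δ) + 1) :=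
        mul_le_mul_of_nonneg_left hNup (by linarith)
      have hBS : ((β+δ)/((β-L)-δ))*S ≤ Mx * S := mul_le_mul_of_nonneg_right hMx1 hS0.le
      calc (β+δ)*(N:ℝ) ≤ (β+δ)*(S/((β-L)-δ) + 1) := hNb
        _ = ((β+δ)/((β-L)-δ))*S + (β+δ) := by ring
        _ ≤ Mx * S + (β+δ) := by linarith
        _ = (β+δ) + Mx * S := by ring
    calc 1/H N ≤ Real.exp ((β+δ)*(N:ℝ)) := h1H
      _ ≤ Real.exp ((β+δ) + Mx * S) := hexpmono
      _ = Real.exp (β+δ) * Real.exp (Mx * S) := Real.exp_add _ _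
  have htk : (1:ℝ)/t^k = Real.exp ((k:ℝ) * S) := by
    rw [show t = Real.exp (Real.log t) from (Real.exp_log ht0).symm, ← Real.exp_nat_mul]
    rw [one_div, ← Real.exp_neg]
    congr 1
    simp only [hSdef]; ring
  have hpiece2 : ((k.factorial : ℝ) * Real.exp (β+δ) / t^k) * (r^N * (1-r)⁻¹)
      ≤ K2 * Real.exp (Mx * S) := by
    have hrN : r^N ≤ Real.exp (-((k:ℝ)*((β-L)-δ) - (β+δ)) * (S/((β-L)+δ))) := by
      rw [hrpow N]
      apply Real.exp_le_exp.mpr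
      have hρpos : (0:ℝ) < (k:ℝ)*((β-L)-δ) - (β+δ) := by linarith
      have := mul_le_mul_of_nonneg_left hNlow.le hρpos.le
      linarith [this]
    have hexpS : (k:ℝ) * S + (-((k:ℝ)*((β-L)-δ) - (β+δ)) * (S/((β-L)+δ))) ≤ Mx * S := by
      have heq : (k:ℝ) * S + (-((k:ℝ)*((β-L)-δ) - (β+δ)) * (S/((β-L)+δ)))
          = ((2*k*δ+β+δ)/((β-L)+δ)) * S := by
        field_simp
        ring
      rw [heq]
      exact mul_le_mul_of_nonneg_right hMx2 hS0.le
    have hfac : (0:ℝ) < (k.factorial : ℝ) * Real.exp (β+δ) := by positivity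
    calc ((k.factorial : ℝ) * Real.exp (β+δ) / t^k) * (r^N * (1-r)⁻¹)
        = ((k.factorial : ℝ) * Real.exp (β+δ)) * (1-r)⁻¹ * (Real.exp ((k:ℝ)*S) * r^N) := by
          rw [← htk]; field_simp
      _ ≤ ((k.factorial : ℝ) * Real.exp (β+δ)) * (1-r)⁻¹ *
            (Real.exp ((k:ℝ)*S) * Real.exp (-((k:ℝ)*((β-L)-δ) - (β+δ)) * (S/((β-L)+δ)))) := by
          apply mul_le_mul_of_nonneg_left _ (by positivity)
          exact mul_le_mul_of_nonneg_left hrN (Real.exp_nonneg _)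
      _ = K2 * Real.exp ((k:ℝ) * S + (-((k:ℝ)*((β-L)-δ) - (β+δ)) * (S/((β-L)+δ)))) := by
          rw [hK2, ← Real.exp_add]
      _ ≤ K2 * Real.exp (Mx * S) :=
          mul_le_mul_of_nonneg_left (Real.exp_le_exp.mpr hexpS) hK2pos.le
  have hp_ub : 1 + P ≤ C * Real.exp (Mx * S) := by
    have : 1 + P ≤ 1/H N + ∑' i, f (i + N) := by
      linarith [hhead_ub, hsplit]
    calc 1 + P ≤ 1/H N + ∑' i, f (i + N) := this
      _ ≤ Real.exp (β+δ) * Real.exp (Mx * S) + K2 * Real.exp (Mx * S) :=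
          add_le_add hpiece1 (le_trans htail_ub hpiece2)
      _ = C * Real.exp (Mx * S) := by rw [hCdef]; ring
  have hub : Real.log (1+P) ≤ Real.log C + Mx * S := by
    have hlog := Real.log_le_log (by linarith : (0:ℝ) < 1 + P) hp_ub
    rwa [Real.log_mul (by linarith : C ≠ 0) (Real.exp_ne_zero _), Real.log_exp] at hlog
  -- conclude
  rw [Real.dist_eq]
  have hlogt : Real.log t = -S := by simp only [hSdef, neg_neg]
  have hxeq : Real.log (1+P) / Real.log t - (-c) = c - Real.log (1+P) / S := by
    rw [hlogt, div_neg]; ring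
  rw [hxeq, abs_lt]
  have hxlb : (β-δ)/((β-L)+δ) - 1/S ≤ Real.log (1+P) / S := by
    have hq : (((β-δ)/((β-L)+δ))*S - 1)/S ≤ Real.log (1+P)/S := (div_le_div_iff_of_pos_right hS0).mpr hlb
    rwa [sub_div, mul_div_assoc, div_self hS0.ne', mul_one] at hq
  have hxub : Real.log (1+P)/S ≤ Real.log C / S + Mx := by
    have hq : Real.log (1+P)/S ≤ (Real.log C + Mx*S)/S := (div_le_div_iff_of_pos_right hS0).mpr hub
    rwa [add_div, mul_div_assoc, div_self hS0.ne', mul_one] at hq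
  constructor
  · have hq : Real.log (1+P)/S - c < ε/4 := by linarith
    linarith
  · have hq : c - Real.log (1+P)/S < ε/4 := by linarith
    linarith
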